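/- Assume V is symmetric positive definite with the completeness property, ρ_τ is a probability density strictly positive on (0,∞), ρ_ξ is a probability density on ℝ^l, and J : ℝ^l × ℝ^d → ℝ^d is measurable and satisfies: there exist a compact set K ⊆ ℝ^d and 0 < α < 1 with ∫ |J(y,p)|² ρ_ξ(y) dy ≤ α|p|² for all p ∉ K, and sup_{p ∈ K} ∫ |J(y,p)|² ρ_ξ(y) dy < ∞. Then there exist a compact set K' ⊆ L = ℝ^{2n} and a constant r > 0 such that for all ψ ∉ K', ∫_0^∞ ∫_{ℝ^l} H(J_L(y; e^{tA}ψ)) ρ_ξ(y) ρ_τ(t) dy dt − H(ψ) ≤ −r H(ψ). -/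

import Mathlib

open Matrix MeasureTheory

/-- Index for the coordinates of one block (particle `i`, component `j`). -/
abbrev PIdx (N d : ℕ) := Fin N × Fin d

/-- The phase space `L = ℝ^{2n}`, `n = dN`: positions indexed by `Sum.inl`, momenta by
`Sum.inr`. -/
abbrev Phase (N d : ℕ) := (PIdx N d ⊕ PIdx N d) → ℝ

/-- The Hamiltonian matrix `A = [[0, (1/M)I], [−V, 0]]`. -/
noncomputable def hamMatrix {N d : ℕ} (M : ℝ) (V : Matrix (PIdx N d) (PIdx N d) ℝ) :
    Matrix (PIdx N d ⊕ PIdx N d) (PIdx N d ⊕ PIdx N d) ℝ :=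
  Matrix.fromBlocks 0 ((1 / M) • 1) (-V) 0

/-- The energy `H(q,p) = |p|²/(2M) + (1/2)⟨q, Vq⟩`. -/
noncomputable def energy {N d : ℕ} (M : ℝ) (V : Matrix (PIdx N d) (PIdx N d) ℝ)
    (ψ : Phase N d) : ℝ :=
  (1 / (2 * M)) * (∑ x, ψ (Sum.inr x) ^ 2) +
    (1 / 2) * ((fun x => ψ (Sum.inl x)) ⬝ᵥ V.mulVec (fun x => ψ (Sum.inl x)))

/-- The momentum `p₁ ∈ ℝ^d` of particle 1. -/
def mom1 {N d : ℕ} (hN : 0 < N) (ψ : Phase N d) : Fin d → ℝ :=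
  fun j => ψ (Sum.inr ((⟨0, hN⟩ : Fin N), j))

/-- The collision map on phase space: `J_L(u;(q,p)) = (q,p')` with `p'₁ = J(u,p₁)` and
`p'ᵢ = pᵢ` for `i > 1`. -/
def JL {N d l : ℕ} (hN : 0 < N) (J : (Fin l → ℝ) → (Fin d → ℝ) → (Fin d → ℝ))
    (u : Fin l → ℝ) (ψ : Phase N d) : Phase N d := fun z =>
  match z with
  | Sum.inl x => ψ (Sum.inl x)
  | Sum.inr x => if x.1 = (⟨0, hN⟩ : Fin N) then J u (mom1 hN ψ) x.2 else ψ (Sum.inr x)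

/-- The free flow `e^{tA}ψ`. -/
noncomputable def flow {N d : ℕ} (M : ℝ) (V : Matrix (PIdx N d) (PIdx N d) ℝ) (t : ℝ)
    (ψ : Phase N d) : Phase N d :=
  (NormedSpace.exp (t • hamMatrix M V)).mulVec ψ

section DC
attribute [local instance] Matrix.linftyOpNormedRing Matrix.linftyOpNormedAlgebra
variable {N d : ℕ} (M : ℝ) (V : Matrix (PIdx N d) (PIdx N d) ℝ)

/-- evaluation of mulVec as a CLM -/
noncomputable def evalCLM (v : Phase N d) (x : PIdx N d ⊕ PIdx N d) :
    Matrix (PIdx N d ⊕ PIdx N d) (PIdx N d ⊕ PIdx N d) ℝ →L[ℝ] ℝ :=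
  LinearMap.toContinuousLinearMap
    { toFun := fun B => B.mulVec v x
      map_add' := by intro a b; simp [Matrix.add_mulVec, Pi.add_apply]
      map_smul' := by intro c a; simp [Matrix.smul_mulVec, Pi.smul_apply] }

theorem flow_hasDerivAt (v : Phase N d) (x : PIdx N d ⊕ PIdx N d) (t : ℝ) :
    HasDerivAt (fun t => flow M V t v x)
      (flow M V t ((hamMatrix M V).mulVec v) x) t := by
  have h := hasDerivAt_exp_smul_const (𝕂 := ℝ) (hamMatrix M V) t
  have h2 := (evalCLM v x).hasFDerivAt.comp_hasDerivAt t h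
  have e1 : (fun t : ℝ => flow M V t v x)
      = fun u : ℝ => evalCLM v x (NormedSpace.exp (u • hamMatrix M V)) := rfl
  rw [e1]
  refine h2.congr_deriv ?_
  show _ = (NormedSpace.exp (t • hamMatrix M V)).mulVec ((hamMatrix M V).mulVec v) x
  rw [Matrix.mulVec_mulVec]; rfl

theorem flow_continuous (v : Phase N d) (x : PIdx N d ⊕ PIdx N d) :
    Continuous (fun t => flow M V t v x) :=
  continuous_iff_continuousAt.2 fun t => (flow_hasDerivAt M V v x t).continuousAt

theorem flow_zero (v : Phase N d) : flow M V 0 v = v := by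
  simp [flow, NormedSpace.exp_zero, Matrix.one_mulVec]

end DC

section DC
attribute [local instance] Matrix.linftyOpNormedRing Matrix.linftyOpNormedAlgebra
variable {N d : ℕ} (M : ℝ) (V : Matrix (PIdx N d) (PIdx N d) ℝ)

/-- The symmetric matrix of the energy quadratic form. -/
noncomputable def enMatrix : Matrix (PIdx N d ⊕ PIdx N d) (PIdx N d ⊕ PIdx N d) ℝ :=
  Matrix.fromBlocks V 0 0 ((1 / M) • 1)

theorem elim_comp (ψ : Phase N d) :
    ψ = Sum.elim (fun x => ψ (Sum.inl x)) (fun x => ψ (Sum.inr x)) :=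
  funext fun z => by cases z <;> rfl

theorem energy_eq (ψ : Phase N d) :
    energy M V ψ = (1 / 2) * (ψ ⬝ᵥ (enMatrix M V).mulVec ψ) := by
  set q := fun x => ψ (Sum.inl x) with hq
  set p := fun x => ψ (Sum.inr x) with hp
  have hpsi : ψ = Sum.elim q p := elim_comp ψ
  conv_rhs => rw [hpsi]
  rw [enMatrix, Matrix.fromBlocks_mulVec, sumElim_dotProduct_sumElim]
  simp only [Sum.elim_comp_inl, Sum.elim_comp_inr, Matrix.zero_mulVec, add_zero, zero_add,
    Matrix.smul_mulVec, Matrix.one_mulVec]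
  rw [energy, dotProduct_smul]
  have h2 : p ⬝ᵥ p = ∑ x, ψ (Sum.inr x) ^ 2 := by
    simp [hp, dotProduct, sq]
  rw [h2]
  rw [smul_eq_mul]
  field_simp
  ring

theorem isUnit_enMatrix (hM : 0 < M) (hV : V.PosDef) : IsUnit (enMatrix M V) := by
  rw [Matrix.isUnit_iff_isUnit_det, enMatrix, Matrix.det_fromBlocks_zero₁₂]
  refine (IsUnit.mul ?_ ?_)
  · exact (hV.det_pos.ne').isUnit
  · rw [Matrix.det_smul, Matrix.det_one, mul_one]
    exact (pow_pos (by positivity) _).ne'.isUnit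

theorem hamMatrix_transpose (hV : Vᵀ = V) :
    (hamMatrix M V)ᵀ = fromBlocks 0 (-V) ((1 / M) • 1) 0 := by
  rw [hamMatrix, Matrix.fromBlocks_transpose]
  congr 1 <;> simp [Matrix.transpose_smul, hV]

theorem key_anti (hM : 0 < M) (hV : Vᵀ = V) :
    (hamMatrix M V)ᵀ * enMatrix M V = -(enMatrix M V * hamMatrix M V) := by
  rw [hamMatrix_transpose M V hV, enMatrix, hamMatrix, Matrix.fromBlocks_multiply,
    Matrix.fromBlocks_multiply, Matrix.fromBlocks_neg]
  congr 1 <;> simp [Matrix.smul_mul, Matrix.mul_smul, smul_smul, mul_comm]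

theorem exp_conservation (hM : 0 < M) (hV : V.PosDef) (t : ℝ) :
    (NormedSpace.exp (t • hamMatrix M V))ᵀ * enMatrix M V
      * NormedSpace.exp (t • hamMatrix M V) = enMatrix M V := by
  set A := hamMatrix M V
  set S := enMatrix M V
  have hU : IsUnit S := isUnit_enMatrix M V hM hV
  have h1 : (t • A)ᵀ = S * (-(t • A)) * S⁻¹ := by
    rw [Matrix.transpose_smul]
    have h2 : Aᵀ * S = -(S * A) := key_anti M V hM (by have h := hV.isHermitian.eq; rwa [Matrix.conjTranspose_eq_transpose_of_trivial] at h)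
    have h3 : Aᵀ = -(S * A) * S⁻¹ := by
      rw [← h2, Matrix.mul_assoc, Matrix.mul_nonsing_inv _ ((Matrix.isUnit_iff_isUnit_det _).1 hU),
        Matrix.mul_one]
    rw [h3]
    simp only [Matrix.neg_mul, Matrix.mul_neg, smul_neg, Matrix.smul_mul, Matrix.mul_smul,
      Matrix.mul_assoc]
  have h4 : (NormedSpace.exp (t • A))ᵀ = S * NormedSpace.exp (-(t • A)) * S⁻¹ := by
    rw [← Matrix.exp_transpose, h1, Matrix.exp_conj S (-(t • A)) hU]
  rw [h4]
  have h5 : NormedSpace.exp (-(t • A)) * NormedSpace.exp (t • A) = 1 := by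
    rw [← Matrix.exp_add_of_commute (-(t • A)) (t • A) (Commute.neg_left rfl),
      neg_add_cancel, NormedSpace.exp_zero]
  calc S * NormedSpace.exp (-(t • A)) * S⁻¹ * S * NormedSpace.exp (t • A)
      = S * NormedSpace.exp (-(t • A)) * (S⁻¹ * S) * NormedSpace.exp (t • A) := by
        rw [Matrix.mul_assoc (S * NormedSpace.exp (-(t • A)))]
    _ = S := by
        rw [Matrix.nonsing_inv_mul _ ((Matrix.isUnit_iff_isUnit_det _).1 hU), Matrix.mul_one,
          Matrix.mul_assoc, h5, Matrix.mul_one]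

theorem energy_flow (hM : 0 < M) (hV : V.PosDef) (t : ℝ) (ψ : Phase N d) :
    energy M V (flow M V t ψ) = energy M V ψ := by
  rw [energy_eq, energy_eq]
  congr 1
  set B := NormedSpace.exp (t • hamMatrix M V)
  have : flow M V t ψ = B.mulVec ψ := rfl
  rw [this, Matrix.mulVec_mulVec, ← Matrix.vecMul_transpose, Matrix.dotProduct_mulVec,
    Matrix.vecMul_vecMul, ← Matrix.mul_assoc, exp_conservation M V hM hV t,
    ← Matrix.dotProduct_mulVec]
end DC

section Obs
variable {N d : ℕ} (M : ℝ) (V : Matrix (PIdx N d) (PIdx N d) ℝ)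

theorem hamMatrix_mulVec_inl (w : Phase N d) (x : PIdx N d) :
    ((hamMatrix M V).mulVec w) (Sum.inl x) = (1 / M) * w (Sum.inr x) := by
  have hw : w = Sum.elim (fun y => w (Sum.inl y)) (fun y => w (Sum.inr y)) :=
    funext fun z => by cases z <;> rfl
  rw [hamMatrix, hw, Matrix.fromBlocks_mulVec]
  simp [Matrix.smul_mulVec, Matrix.one_mulVec]

theorem hamMatrix_mulVec_inr (w : Phase N d) (x : PIdx N d) :
    ((hamMatrix M V).mulVec w) (Sum.inr x) = -(V.mulVec (fun y => w (Sum.inl y))) x := by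
  have hw : w = Sum.elim (fun y => w (Sum.inl y)) (fun y => w (Sum.inr y)) :=
    funext fun z => by cases z <;> rfl
  rw [hamMatrix, hw, Matrix.fromBlocks_mulVec]
  simp [Matrix.neg_mulVec]

/-- orthogonality from completeness -/
theorem ortho_zero (hV : Vᵀ = V) (x₁ : PIdx N d)
    (hcompl : Submodule.span ℝ
      (Set.range fun k : ℕ => (V ^ k).mulVec (Pi.single x₁ 1)) = ⊤)
    (u : PIdx N d → ℝ) (hu : ∀ m : ℕ, ((V ^ m).mulVec u) x₁ = 0) : u = 0 := by
  set φ : (PIdx N d → ℝ) →ₗ[ℝ] ℝ :=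
    { toFun := fun v => v ⬝ᵥ u
      map_add' := by intro a b; simp [add_dotProduct]
      map_smul' := by intro c a; simp [smul_dotProduct] } with hφ
  have hker : ∀ m : ℕ, φ ((V ^ m).mulVec (Pi.single x₁ 1)) = 0 := by
    intro m
    have hs : ((V ^ m).mulVec (Pi.single x₁ 1)) = fun i => (V ^ m) i x₁ := by
      funext i; rw [Matrix.mulVec_single]; simp
    have htr : (V ^ m)ᵀ = V ^ m := by rw [Matrix.transpose_pow, hV]
    have hsym : ∀ i, (V ^ m) i x₁ = (V ^ m) x₁ i := by
      intro i
      calc (V ^ m) i x₁ = (V ^ m)ᵀ x₁ i := rfl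
        _ = (V ^ m) x₁ i := by rw [htr]
    show ((V ^ m).mulVec (Pi.single x₁ 1)) ⬝ᵥ u = 0
    rw [hs]
    calc (fun i => (V ^ m) i x₁) ⬝ᵥ u = ∑ i, (V ^ m) x₁ i * u i := by
          simp [dotProduct, hsym]
      _ = ((V ^ m).mulVec u) x₁ := rfl
      _ = 0 := hu m
  have hle : Submodule.span ℝ
      (Set.range fun k : ℕ => (V ^ k).mulVec (Pi.single x₁ 1)) ≤ LinearMap.ker φ := by
    rw [Submodule.span_le]
    rintro v ⟨k, rfl⟩
    exact hker k
  rw [hcompl, top_le_iff] at hle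
  have : φ u = 0 := by rw [← LinearMap.mem_ker, hle]; trivial
  have : u ⬝ᵥ u = 0 := this
  exact dotProduct_self_eq_zero.1 this

theorem observability (hN : 0 < N) (hd : 0 < d) (hM : 0 < M) (hV : V.PosDef)
    (hcompl : Submodule.span ℝ
        (Set.range fun k : ℕ =>
          (V ^ k).mulVec (Pi.single ((⟨0, hN⟩ : Fin N), (⟨0, hd⟩ : Fin d)) 1)) = ⊤)
    (ψ : Phase N d)
    (h : ∀ t ∈ Set.Ioi (0:ℝ), ∀ j : Fin d,
      flow M V t ψ (Sum.inr ((⟨0, hN⟩ : Fin N), j)) = 0) : ψ = 0 := by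
  set x₁ : PIdx N d := ((⟨0, hN⟩ : Fin N), (⟨0, hd⟩ : Fin d))
  set A := hamMatrix M V
  have hVs : Vᵀ = V := by
    have h := hV.isHermitian.eq; rwa [Matrix.conjTranspose_eq_transpose_of_trivial] at h
  -- step a: all iterates vanish along the flow
  have ha : ∀ k : ℕ, ∀ t ∈ Set.Ioi (0:ℝ), ∀ j : Fin d,
      flow M V t ((A ^ k).mulVec ψ) (Sum.inr ((⟨0, hN⟩ : Fin N), j)) = 0 := by
    intro k
    induction k with
    | zero => intro t ht j; simpa [Matrix.one_mulVec] using h t ht j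
    | succ k ih =>
      intro t ht j
      set x := Sum.inr (α := PIdx N d) ((⟨0, hN⟩ : Fin N), j)
      have hf : (fun s => flow M V s ((A ^ k).mulVec ψ) x) =ᶠ[nhds t] (fun _ => 0) := by
        have : Set.Ioi (0:ℝ) ∈ nhds t := isOpen_Ioi.mem_nhds ht
        filter_upwards [this] with s hs
        exact ih s hs j
      have h1 : HasDerivAt (fun s => flow M V s ((A ^ k).mulVec ψ) x)
          (flow M V t (A.mulVec ((A ^ k).mulVec ψ)) x) t := flow_hasDerivAt M V _ x t
      have h2 : HasDerivAt (fun s => flow M V s ((A ^ k).mulVec ψ) x) 0 t :=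
        (hasDerivAt_const t (0:ℝ)).congr_of_eventuallyEq hf
      have h3 := h1.unique h2
      rwa [Matrix.mulVec_mulVec, ← pow_succ'] at h3
  -- step b: limit t → 0⁺
  have hb : ∀ k : ℕ, ∀ j : Fin d,
      ((A ^ k).mulVec ψ) (Sum.inr ((⟨0, hN⟩ : Fin N), j)) = 0 := by
    intro k j
    set x := Sum.inr (α := PIdx N d) ((⟨0, hN⟩ : Fin N), j)
    set f := fun s => flow M V s ((A ^ k).mulVec ψ) x
    have hc : Filter.Tendsto f (nhdsWithin 0 (Set.Ioi 0)) (nhds (f 0)) :=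
      ((flow_continuous M V _ x).continuousAt).continuousWithinAt
    have hz : Filter.Tendsto f (nhdsWithin 0 (Set.Ioi 0)) (nhds 0) := by
      apply Filter.Tendsto.congr' _ tendsto_const_nhds
      filter_upwards [self_mem_nhdsWithin] with s hs
      exact (ha k s hs j).symm
    have hval : f 0 = 0 := tendsto_nhds_unique hc hz
    have hf0 : f 0 = ((A ^ k).mulVec ψ) x := by
      show flow M V 0 _ x = _
      rw [flow_zero]
    rwa [hf0] at hval
  -- step c: recurrences
  set qv : ℕ → PIdx N d → ℝ := fun k x => ((A ^ k).mulVec ψ) (Sum.inl x) with hqv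
  set pv : ℕ → PIdx N d → ℝ := fun k x => ((A ^ k).mulVec ψ) (Sum.inr x) with hpv
  have hrecq : ∀ k, qv (k + 1) = (1 / M) • pv k := by
    intro k
    funext x
    show ((A ^ (k + 1)).mulVec ψ) (Sum.inl x) = (1 / M) * pv k x
    rw [pow_succ', ← Matrix.mulVec_mulVec, hamMatrix_mulVec_inl]
  have hrecp : ∀ k, pv (k + 1) = -(V.mulVec (qv k)) := by
    intro k
    funext x
    show ((A ^ (k + 1)).mulVec ψ) (Sum.inr x) = -(V.mulVec (qv k)) x
    rw [pow_succ', ← Matrix.mulVec_mulVec, hamMatrix_mulVec_inr]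
  have hcf : ∀ m : ℕ, qv (2 * m) = ((-(1 / M)) ^ m) • ((V ^ m).mulVec (qv 0)) ∧
      pv (2 * m) = ((-(1 / M)) ^ m) • ((V ^ m).mulVec (pv 0)) := by
    intro m
    induction m with
    | zero => simp [Matrix.one_mulVec]
    | succ m ih =>
      have e1 : 2 * (m + 1) = (2 * m + 1) + 1 := by ring
      constructor
      · rw [e1, hrecq, hrecp, ih.1]
        funext x
        simp only [Matrix.mulVec_smul, Pi.smul_apply, Pi.neg_apply, smul_eq_mul,
          Matrix.mulVec_mulVec, pow_succ']
        ring
      · rw [e1, hrecp, hrecq, ih.2]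
        funext x
        simp only [Matrix.mulVec_smul, Pi.smul_apply, Pi.neg_apply, smul_eq_mul,
          Matrix.mulVec_mulVec, pow_succ']
        ring
  have hMne : (-(1 / M)) ≠ 0 := by
    simp only [ne_eq, neg_eq_zero, one_div, inv_eq_zero]
    exact hM.ne'
  have hp0 : ∀ m : ℕ, ((V ^ m).mulVec (pv 0)) x₁ = 0 := by
    intro m
    have h1 := hb (2 * m) (⟨0, hd⟩ : Fin d)
    have h2 : pv (2 * m) x₁ = 0 := h1
    rw [(hcf m).2] at h2
    simp only [Pi.smul_apply, smul_eq_mul] at h2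
    exact (mul_eq_zero.1 h2).resolve_left (pow_ne_zero m hMne)
  have hq0 : ∀ m : ℕ, ((V ^ m).mulVec (V.mulVec (qv 0))) x₁ = 0 := by
    intro m
    have h1 := hb (2 * m + 1) (⟨0, hd⟩ : Fin d)
    have h2 : pv (2 * m + 1) x₁ = 0 := h1
    rw [hrecp, (hcf m).1, Matrix.mulVec_smul] at h2
    simp only [Pi.neg_apply, Pi.smul_apply, smul_eq_mul, neg_eq_zero] at h2
    have h3 := (mul_eq_zero.1 h2).resolve_left (pow_ne_zero m hMne)
    rw [Matrix.mulVec_mulVec, ← pow_succ', pow_succ, ← Matrix.mulVec_mulVec] at h3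
    exact h3
  have hpz : pv 0 = 0 := ortho_zero V hVs x₁ hcompl _ hp0
  have hVq : V.mulVec (qv 0) = 0 := ortho_zero V hVs x₁ hcompl _ hq0
  have hqz : qv 0 = 0 := by
    by_contra hne
    have := hV.dotProduct_mulVec_pos hne
    rw [hVq] at this
    simp at this
  funext z
  cases z with
  | inl x =>
    have : qv 0 x = 0 := by rw [hqz]; rfl
    simpa [hqv, Matrix.one_mulVec] using this
  | inr x =>
    have : pv 0 x = 0 := by rw [hpz]; rfl
    simpa [hpv, Matrix.one_mulVec] using this

end Obs

section Energy
variable {N d : ℕ} (M : ℝ) (V : Matrix (PIdx N d) (PIdx N d) ℝ)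

theorem energy_continuous : Continuous (energy M V) := by
  apply Continuous.add
  · exact continuous_const.mul (continuous_finset_sum _ fun x _ =>
      (continuous_apply (Sum.inr x)).pow 2)
  · refine continuous_const.mul ?_
    refine continuous_finset_sum _ fun x _ => ?_
    exact ((continuous_apply (Sum.inl x)).mul
      (continuous_finset_sum _ fun y _ => continuous_const.mul (continuous_apply (Sum.inl y))))

theorem energy_smul (c : ℝ) (ψ : Phase N d) :
    energy M V (c • ψ) = c ^ 2 * energy M V ψ := by
  rw [energy_eq, energy_eq, Matrix.mulVec_smul, dotProduct_smul, smul_dotProduct]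
  simp only [smul_eq_mul]
  ring

theorem energy_nonneg (hM : 0 < M) (hV : V.PosDef) (ψ : Phase N d) :
    0 ≤ energy M V ψ := by
  have h1 : 0 ≤ ∑ x, ψ (Sum.inr x) ^ 2 := Finset.sum_nonneg fun x _ => sq_nonneg _
  have h2 : 0 ≤ (fun x => ψ (Sum.inl x)) ⬝ᵥ V.mulVec (fun x => ψ (Sum.inl x)) := by
    have := hV.posSemidef.dotProduct_mulVec_nonneg (fun x => ψ (Sum.inl x))
    simpa using this
  have hM' : 0 ≤ 1 / (2 * M) := by positivity
  unfold energy; positivity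

theorem energy_pos (hM : 0 < M) (hV : V.PosDef) (ψ : Phase N d) (hψ : ψ ≠ 0) :
    0 < energy M V ψ := by
  have h1 : 0 ≤ ∑ x, ψ (Sum.inr x) ^ 2 := Finset.sum_nonneg fun x _ => sq_nonneg _
  have h2 : 0 ≤ (fun x => ψ (Sum.inl x)) ⬝ᵥ V.mulVec (fun x => ψ (Sum.inl x)) := by
    have := hV.posSemidef.dotProduct_mulVec_nonneg (fun x => ψ (Sum.inl x)); simpa using this
  by_cases hp : (fun x => ψ (Sum.inr x)) = 0
  · have hq : (fun x => ψ (Sum.inl x)) ≠ 0 := by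
      intro hq
      apply hψ
      funext z
      cases z with
      | inl x => exact congrFun hq x
      | inr x => exact congrFun hp x
    have h3 : 0 < (fun x => ψ (Sum.inl x)) ⬝ᵥ V.mulVec (fun x => ψ (Sum.inl x)) := by
      have := hV.dotProduct_mulVec_pos hq; simpa using this
    have : 0 ≤ (1 / (2 * M)) * ∑ x, ψ (Sum.inr x) ^ 2 := by positivity
    unfold energy; nlinarith
  · have ⟨x, hx⟩ : ∃ x, ψ (Sum.inr x) ≠ 0 := by
      by_contra hco; push_neg at hco; exact hp (funext hco)
    have h3 : 0 < ∑ x, ψ (Sum.inr x) ^ 2 :=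
      Finset.sum_pos' (fun y _ => sq_nonneg _) ⟨x, Finset.mem_univ x, by positivity⟩
    have : 0 < (1 / (2 * M)) * ∑ x, ψ (Sum.inr x) ^ 2 := by positivity
    unfold energy; nlinarith
end Energy

section Kin
variable {N d : ℕ}
noncomputable def kin1 (hN : 0 < N) (ψ : Phase N d) : ℝ :=
  ∑ j, ψ (Sum.inr ((⟨0, hN⟩ : Fin N), j)) ^ 2

theorem kin1_nonneg (hN : 0 < N) (ψ : Phase N d) : 0 ≤ kin1 hN ψ :=
  Finset.sum_nonneg fun _ _ => sq_nonneg _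

theorem kin1_le_sum (hN : 0 < N) (ψ : Phase N d) :
    kin1 hN ψ ≤ ∑ x, ψ (Sum.inr x) ^ 2 := by
  rw [kin1]
  have : ∑ x : PIdx N d, ψ (Sum.inr x) ^ 2
      = ∑ i : Fin N, ∑ j : Fin d, ψ (Sum.inr (i, j)) ^ 2 :=
    Fintype.sum_prod_type (f := fun x : PIdx N d => ψ (Sum.inr x) ^ 2)
  rw [this]
  exact Finset.single_le_sum (f := fun i => ∑ j : Fin d, ψ (Sum.inr (i, j)) ^ 2)
    (fun i _ => Finset.sum_nonneg fun j _ => sq_nonneg _) (Finset.mem_univ _)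

theorem kin1_le_energy (M : ℝ) (V : Matrix (PIdx N d) (PIdx N d) ℝ) (hM : 0 < M)
    (hV : V.PosDef) (hN : 0 < N) (ψ : Phase N d) :
    kin1 hN ψ ≤ 2 * M * energy M V ψ := by
  have h1 := kin1_le_sum hN ψ
  have h2 : 0 ≤ (fun x => ψ (Sum.inl x)) ⬝ᵥ V.mulVec (fun x => ψ (Sum.inl x)) := by
    have := hV.posSemidef.dotProduct_mulVec_nonneg (fun x => ψ (Sum.inl x)); simpa using this
  have h3 : 2 * M * energy M V ψ = (∑ x, ψ (Sum.inr x) ^ 2)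
      + M * ((fun x => ψ (Sum.inl x)) ⬝ᵥ V.mulVec (fun x => ψ (Sum.inl x))) := by
    unfold energy; field_simp
  nlinarith

theorem kin1_smul (hN : 0 < N) (c : ℝ) (ψ : Phase N d) :
    kin1 hN (c • ψ) = c ^ 2 * kin1 hN ψ := by
  simp [kin1, Finset.mul_sum, mul_pow]

theorem kin1_continuous (hN : 0 < N) : Continuous (kin1 (d := d) hN) :=
  continuous_finset_sum _ fun j _ => (continuous_apply _).pow 2
end Kin


theorem quad_lower {E : Type*} [NormedAddCommGroup E] [NormedSpace ℝ E]
    [ProperSpace E] (h : E → ℝ) (hc : Continuous h) (hpos : ∀ ψ, ψ ≠ 0 → 0 < h ψ)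
    (hhom : ∀ (c : ℝ) (ψ : E), h (c • ψ) = c ^ 2 * h ψ) :
    ∃ c : ℝ, 0 < c ∧ ∀ ψ, c * ‖ψ‖ ^ 2 ≤ h ψ := by
  by_cases hS : ∃ ψ : E, ψ ≠ 0
  · obtain ⟨ψ₀, hψ₀⟩ := hS
    have hcpt : IsCompact (Metric.sphere (0:E) 1) := isCompact_sphere 0 1
    have hne : (Metric.sphere (0:E) 1).Nonempty :=
      ⟨‖ψ₀‖⁻¹ • ψ₀, by
        simp [norm_smul, abs_of_nonneg (inv_nonneg.2 (norm_nonneg ψ₀)),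
          inv_mul_cancel₀ (norm_ne_zero_iff.2 hψ₀)]⟩
    obtain ⟨ψm, hψm, hmin⟩ := hcpt.exists_isMinOn hne hc.continuousOn
    have hm : 0 < h ψm := hpos _ (by
      intro h0; rw [h0] at hψm; simp at hψm)
    refine ⟨h ψm, hm, fun ψ => ?_⟩
    rcases eq_or_ne ψ 0 with rfl | hψ
    · have : h (0:E) = 0 := by
        have := hhom 0 0; simpa using this
      simp [this]
    · have hn : ‖ψ‖ ≠ 0 := norm_ne_zero_iff.2 hψ
      have hmem : ‖ψ‖⁻¹ • ψ ∈ Metric.sphere (0:E) 1 := by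
        simp [norm_smul, abs_of_nonneg (inv_nonneg.2 (norm_nonneg ψ)), inv_mul_cancel₀ hn]
      have hval : h ψ = ‖ψ‖ ^ 2 * h (‖ψ‖⁻¹ • ψ) := by
        conv_lhs => rw [show ψ = ‖ψ‖ • (‖ψ‖⁻¹ • ψ) by
          rw [smul_smul, mul_inv_cancel₀ hn, one_smul]]
        rw [hhom]
      rw [hval, mul_comm (h ψm)]
      exact mul_le_mul_of_nonneg_left (hmin hmem) (by positivity)
  · push_neg at hS
    refine ⟨1, one_pos, fun ψ => ?_⟩
    rw [hS ψ]
    have h0 : h (0:E) = 0 := by have := hhom 0 0; simpa using this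
    simp [h0]

theorem quad_upper {E : Type*} [NormedAddCommGroup E] [NormedSpace ℝ E]
    [ProperSpace E] (h : E → ℝ) (hc : Continuous h)
    (hhom : ∀ (c : ℝ) (ψ : E), h (c • ψ) = c ^ 2 * h ψ) :
    ∃ C : ℝ, 0 < C ∧ ∀ ψ, h ψ ≤ C * ‖ψ‖ ^ 2 := by
  by_cases hS : ∃ ψ : E, ψ ≠ 0
  · obtain ⟨ψ₀, hψ₀⟩ := hS
    have hcpt : IsCompact (Metric.sphere (0:E) 1) := isCompact_sphere 0 1
    have hne : (Metric.sphere (0:E) 1).Nonempty :=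
      ⟨‖ψ₀‖⁻¹ • ψ₀, by
        simp [norm_smul, abs_of_nonneg (inv_nonneg.2 (norm_nonneg ψ₀)),
          inv_mul_cancel₀ (norm_ne_zero_iff.2 hψ₀)]⟩
    obtain ⟨ψm, hψm, hmax⟩ := hcpt.exists_isMaxOn hne hc.continuousOn
    refine ⟨|h ψm| + 1, by positivity, fun ψ => ?_⟩
    rcases eq_or_ne ψ 0 with rfl | hψ
    · have h0 : h (0:E) = 0 := by have := hhom 0 0; simpa using this
      simp [h0]
    · have hn : ‖ψ‖ ≠ 0 := norm_ne_zero_iff.2 hψ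
      have hmem : ‖ψ‖⁻¹ • ψ ∈ Metric.sphere (0:E) 1 := by
        simp [norm_smul, abs_of_nonneg (inv_nonneg.2 (norm_nonneg ψ)), inv_mul_cancel₀ hn]
      have hval : h ψ = ‖ψ‖ ^ 2 * h (‖ψ‖⁻¹ • ψ) := by
        conv_lhs => rw [show ψ = ‖ψ‖ • (‖ψ‖⁻¹ • ψ) by
          rw [smul_smul, mul_inv_cancel₀ hn, one_smul]]
        rw [hhom]
      rw [hval, mul_comm (|h ψm| + 1)]
      refine mul_le_mul_of_nonneg_left ?_ (by positivity)
      calc h (‖ψ‖⁻¹ • ψ) ≤ h ψm := hmax hmem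
        _ ≤ |h ψm| + 1 := by
          have := le_abs_self (h ψm); linarith
  · push_neg at hS
    refine ⟨1, one_pos, fun ψ => ?_⟩
    rw [hS ψ]
    have h0 : h (0:E) = 0 := by have := hhom 0 0; simpa using this
    simp [h0]



section Ffun
variable {N d : ℕ} (M : ℝ) (V : Matrix (PIdx N d) (PIdx N d) ℝ) (ρτ : ℝ → ℝ) (hN : 0 < N)

noncomputable def Ffun (ψ : Phase N d) : ℝ :=
  ∫ t in Set.Ioi (0:ℝ), kin1 hN (flow M V t ψ) * ρτ t

theorem rhotau_integrable (hρτint : ∫ t, ρτ t = 1) : Integrable ρτ := by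
  by_contra h
  rw [integral_undef h] at hρτint
  exact one_ne_zero hρτint.symm

theorem flow_apply_continuous_psi (t : ℝ) (x : PIdx N d ⊕ PIdx N d) :
    Continuous fun ψ : Phase N d => flow M V t ψ x := by
  have : (fun ψ : Phase N d => flow M V t ψ x)
      = fun ψ => ∑ y, (NormedSpace.exp (t • hamMatrix M V)) x y * ψ y := rfl
  rw [this]
  exact continuous_finset_sum _ fun y _ => continuous_const.mul (continuous_apply y)

theorem flow_smul (t : ℝ) (c : ℝ) (ψ : Phase N d) :
    flow M V t (c • ψ) = c • flow M V t ψ := by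
  unfold flow; rw [Matrix.mulVec_smul]

theorem kinflow_continuous (ψ : Phase N d) :
    Continuous fun t => kin1 hN (flow M V t ψ) :=
  continuous_finset_sum _ fun j _ => (flow_continuous M V ψ _).pow 2

theorem Ffun_integrand_integrable (hM : 0 < M) (hV : V.PosDef) (hρτmeas : Measurable ρτ)
    (hρτpos : ∀ t, 0 < t → 0 < ρτ t) (hρτint : ∫ t, ρτ t = 1) (ψ : Phase N d) :
    Integrable (fun t => kin1 hN (flow M V t ψ) * ρτ t)
      (volume.restrict (Set.Ioi (0:ℝ))) := by
  refine Integrable.mono' (g := fun t => (2 * M * energy M V ψ) * ρτ t)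
    (((rhotau_integrable ρτ hρτint).restrict).const_mul _)
    (((kinflow_continuous M V hN ψ).measurable.mul hρτmeas).aestronglyMeasurable) ?_
  rw [ae_restrict_iff' measurableSet_Ioi]
  filter_upwards with t ht
  have h0 : 0 ≤ ρτ t := (hρτpos t ht).le
  have h1 : 0 ≤ kin1 hN (flow M V t ψ) := kin1_nonneg hN _
  rw [Real.norm_of_nonneg (by positivity)]
  have h2 : kin1 hN (flow M V t ψ) ≤ 2 * M * energy M V ψ := by
    have := kin1_le_energy M V hM hV hN (flow M V t ψ)
    rwa [energy_flow M V hM hV] at this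
  exact mul_le_mul_of_nonneg_right h2 h0

theorem Ffun_nonneg (hρτpos : ∀ t, 0 < t → 0 < ρτ t) (ψ : Phase N d) :
    0 ≤ Ffun M V ρτ hN ψ := by
  refine setIntegral_nonneg measurableSet_Ioi fun t ht => ?_
  exact mul_nonneg (kin1_nonneg hN _) (hρτpos t ht).le

theorem Ffun_smul (c : ℝ) (ψ : Phase N d) :
    Ffun M V ρτ hN (c • ψ) = c ^ 2 * Ffun M V ρτ hN ψ := by
  unfold Ffun
  rw [← MeasureTheory.integral_const_mul]
  congr 1
  funext t
  rw [flow_smul, kin1_smul]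
  ring

theorem Ffun_continuous (hM : 0 < M) (hV : V.PosDef) (hρτmeas : Measurable ρτ)
    (hρτpos : ∀ t, 0 < t → 0 < ρτ t) (hρτint : ∫ t, ρτ t = 1) :
    Continuous (Ffun M V ρτ hN) := by
  obtain ⟨CE, hCE, hCEb⟩ := quad_upper (energy M V) (energy_continuous M V)
    (energy_smul M V)
  rw [continuous_iff_continuousAt]
  intro ψ₀
  refine MeasureTheory.continuousAt_of_dominated
    (F := fun ψ t => kin1 hN (flow M V t ψ) * ρτ t)
    (bound := fun t => (2 * M * (CE * (‖ψ₀‖ + 1) ^ 2)) * ρτ t) ?_ ?_ ?_ ?_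
  · filter_upwards with ψ
    exact (((kinflow_continuous M V hN ψ).measurable.mul hρτmeas).aestronglyMeasurable)
  · have hball : Metric.ball ψ₀ 1 ∈ nhds ψ₀ := Metric.ball_mem_nhds ψ₀ one_pos
    filter_upwards [hball] with ψ hψ
    rw [ae_restrict_iff' measurableSet_Ioi]
    filter_upwards with t ht
    have h0 : 0 ≤ ρτ t := (hρτpos t ht).le
    have h1 : 0 ≤ kin1 hN (flow M V t ψ) := kin1_nonneg hN _
    rw [Real.norm_of_nonneg (by positivity)]
    refine mul_le_mul_of_nonneg_right ?_ h0
    have h2 : kin1 hN (flow M V t ψ) ≤ 2 * M * energy M V ψ := by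
      have := kin1_le_energy M V hM hV hN (flow M V t ψ)
      rwa [energy_flow M V hM hV] at this
    have h3 : energy M V ψ ≤ CE * ‖ψ‖ ^ 2 := hCEb ψ
    have h4 : ‖ψ‖ ≤ ‖ψ₀‖ + 1 := by
      have := mem_ball_iff_norm.1 hψ
      have h5 := norm_sub_norm_le ψ ψ₀
      linarith
    have h6 : ‖ψ‖ ^ 2 ≤ (‖ψ₀‖ + 1) ^ 2 := by
      have : (0:ℝ) ≤ ‖ψ‖ := norm_nonneg _
      nlinarith
    have h7 : energy M V ψ ≤ CE * (‖ψ₀‖ + 1) ^ 2 :=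
      le_trans h3 (mul_le_mul_of_nonneg_left h6 hCE.le)
    calc kin1 hN (flow M V t ψ) ≤ 2 * M * energy M V ψ := h2
      _ ≤ 2 * M * (CE * (‖ψ₀‖ + 1) ^ 2) := by nlinarith [hM.le]
  · exact ((rhotau_integrable ρτ hρτint).restrict).const_mul _
  · filter_upwards with t
    refine ContinuousAt.mul ?_ continuousAt_const
    exact ((continuous_finset_sum _ fun j _ =>
      (flow_apply_continuous_psi M V t _).pow 2).continuousAt)

theorem Ffun_pos (hd : 0 < d) (hM : 0 < M) (hV : V.PosDef) (hρτmeas : Measurable ρτ)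
    (hρτpos : ∀ t, 0 < t → 0 < ρτ t) (hρτint : ∫ t, ρτ t = 1)
    (hcompl : Submodule.span ℝ
        (Set.range fun k : ℕ =>
          (V ^ k).mulVec (Pi.single ((⟨0, hN⟩ : Fin N), (⟨0, hd⟩ : Fin d)) 1)) = ⊤)
    (ψ : Phase N d) (hψ : ψ ≠ 0) : 0 < Ffun M V ρτ hN ψ := by
  rcases lt_or_eq_of_le (Ffun_nonneg M V ρτ hN hρτpos ψ) with h | h
  · exact h
  exfalso
  apply hψ
  have hzero : ∫ t in Set.Ioi (0:ℝ), kin1 hN (flow M V t ψ) * ρτ t = 0 := h.symm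
  have hnn0 : ∀ᵐ t ∂(volume.restrict (Set.Ioi (0:ℝ))),
      0 ≤ kin1 hN (flow M V t ψ) * ρτ t := by
    rw [ae_restrict_iff' measurableSet_Ioi]
    filter_upwards with t ht
    exact mul_nonneg (kin1_nonneg hN _) (hρτpos t ht).le
  have hnn : (0 : ℝ → ℝ) ≤ᵐ[volume.restrict (Set.Ioi (0:ℝ))]
      fun t => kin1 hN (flow M V t ψ) * ρτ t := hnn0
  have hae := (MeasureTheory.integral_eq_zero_iff_of_nonneg_ae hnn
    (Ffun_integrand_integrable M V ρτ hN hM hV hρτmeas hρτpos hρτint ψ)).1 hzero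
  have hmeasf : Measurable fun t => kin1 hN (flow M V t ψ) * ρτ t :=
    (kinflow_continuous M V hN ψ).measurable.mul hρτmeas
  have hms : MeasurableSet {t : ℝ | kin1 hN (flow M V t ψ) * ρτ t ≠ 0} :=
    (hmeasf (measurableSet_singleton 0)).compl
  have hm0 : volume ({t : ℝ | kin1 hN (flow M V t ψ) * ρτ t ≠ 0} ∩ Set.Ioi 0) = 0 := by
    have h' := MeasureTheory.ae_iff.1 hae
    simp only [Pi.zero_apply] at h'
    rw [MeasureTheory.Measure.restrict_apply hms] at h'
    exact h'
  have hv : ∀ t ∈ Set.Ioi (0:ℝ), ∀ j : Fin d,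
      flow M V t ψ (Sum.inr ((⟨0, hN⟩ : Fin N), j)) = 0 := by
    intro t₀ ht₀ j
    by_contra hne
    have hsq : 0 < flow M V t₀ ψ (Sum.inr ((⟨0, hN⟩ : Fin N), j)) ^ 2 :=
      lt_of_le_of_ne (sq_nonneg _) (Ne.symm (pow_ne_zero 2 hne))
    have hk : 0 < kin1 hN (flow M V t₀ ψ) :=
      Finset.sum_pos' (fun y _ => sq_nonneg _) ⟨j, Finset.mem_univ j, hsq⟩
    set U : Set ℝ := Set.Ioi 0 ∩ {t | 0 < kin1 hN (flow M V t ψ)} with hU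
    have hUopen : IsOpen U :=
      isOpen_Ioi.inter (isOpen_lt continuous_const (kinflow_continuous M V hN ψ))
    have hUne : U.Nonempty := ⟨t₀, ht₀, hk⟩
    have hUpos : 0 < volume U := hUopen.measure_pos volume hUne
    have hUsub : U ⊆ {t : ℝ | kin1 hN (flow M V t ψ) * ρτ t ≠ 0} ∩ Set.Ioi 0 := by
      rintro t ⟨ht1, ht2⟩
      exact ⟨(mul_pos ht2 (hρτpos t ht1)).ne', ht1⟩
    have hle := measure_mono (μ := (volume : Measure ℝ)) hUsub
    rw [hm0] at hle
    exact absurd (le_antisymm hle zero_le) hUpos.ne'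
  exact observability M V hN hd hM hV hcompl ψ hv

theorem Ffun_lower (hd : 0 < d) (hM : 0 < M) (hV : V.PosDef) (hρτmeas : Measurable ρτ)
    (hρτpos : ∀ t, 0 < t → 0 < ρτ t) (hρτint : ∫ t, ρτ t = 1)
    (hcompl : Submodule.span ℝ
        (Set.range fun k : ℕ =>
          (V ^ k).mulVec (Pi.single ((⟨0, hN⟩ : Fin N), (⟨0, hd⟩ : Fin d)) 1)) = ⊤) :
    ∃ c : ℝ, 0 < c ∧ ∀ ψ : Phase N d, c * energy M V ψ ≤ Ffun M V ρτ hN ψ := by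
  obtain ⟨c1, hc1, hc1b⟩ := quad_lower (Ffun M V ρτ hN)
    (Ffun_continuous M V ρτ hN hM hV hρτmeas hρτpos hρτint)
    (fun ψ hψ => Ffun_pos M V ρτ hN hd hM hV hρτmeas hρτpos hρτint hcompl ψ hψ)
    (Ffun_smul M V ρτ hN)
  obtain ⟨CE, hCE, hCEb⟩ := quad_upper (energy M V) (energy_continuous M V) (energy_smul M V)
  refine ⟨c1 / CE, by positivity, fun ψ => ?_⟩
  have h1 : c1 * ‖ψ‖ ^ 2 ≤ Ffun M V ρτ hN ψ := hc1b ψ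
  have h2 : energy M V ψ ≤ CE * ‖ψ‖ ^ 2 := hCEb ψ
  rw [div_mul_eq_mul_div, div_le_iff₀ hCE]
  calc c1 * energy M V ψ ≤ c1 * (CE * ‖ψ‖ ^ 2) := by
        exact mul_le_mul_of_nonneg_left h2 hc1.le
    _ = (c1 * ‖ψ‖ ^ 2) * CE := by ring
    _ ≤ Ffun M V ρτ hN ψ * CE := mul_le_mul_of_nonneg_right h1 hCE.le
end Ffun

section Coll
variable {N d l : ℕ} (M : ℝ) (V : Matrix (PIdx N d) (PIdx N d) ℝ) (hN : 0 < N)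
  (J : (Fin l → ℝ) → (Fin d → ℝ) → (Fin d → ℝ))

theorem energy_JL (hM : 0 < M) (y : Fin l → ℝ) (φ : Phase N d) :
    energy M V (JL hN J y φ) = energy M V φ - (1 / (2 * M)) * kin1 hN φ
      + (1 / (2 * M)) * ∑ j, J y (mom1 hN φ) j ^ 2 := by
  set i₀ : Fin N := ⟨0, hN⟩
  have hpot : (fun x => (JL hN J y φ) (Sum.inl x)) = fun x => φ (Sum.inl x) := rfl
  have hkin : ∑ x : PIdx N d, (JL hN J y φ) (Sum.inr x) ^ 2
      = ∑ x : PIdx N d, φ (Sum.inr x) ^ 2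
        + (∑ j, J y (mom1 hN φ) j ^ 2 - kin1 hN φ) := by
    have h1 : ∑ x : PIdx N d, (JL hN J y φ) (Sum.inr x) ^ 2
        = ∑ i : Fin N, ∑ j : Fin d,
          (if i = i₀ then J y (mom1 hN φ) j else φ (Sum.inr (i, j))) ^ 2 := by
      rw [Fintype.sum_prod_type (f := fun x : PIdx N d => (JL hN J y φ) (Sum.inr x) ^ 2)]
      rfl
    have h2 : ∑ x : PIdx N d, φ (Sum.inr x) ^ 2
        = ∑ i : Fin N, ∑ j : Fin d, φ (Sum.inr (i, j)) ^ 2 :=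
      Fintype.sum_prod_type (f := fun x : PIdx N d => φ (Sum.inr x) ^ 2)
    rw [h1, h2]
    have h3 : ∀ i : Fin N,
        (∑ j : Fin d, (if i = i₀ then J y (mom1 hN φ) j else φ (Sum.inr (i, j))) ^ 2)
        = (∑ j : Fin d, φ (Sum.inr (i, j)) ^ 2)
          + (if i = i₀ then (∑ j, J y (mom1 hN φ) j ^ 2) - kin1 hN φ else 0) := by
      intro i
      by_cases hi : i = i₀
      · subst hi
        simp [kin1, i₀]
      · simp [hi]
    rw [Finset.sum_congr rfl fun i _ => h3 i, Finset.sum_add_distrib,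
      Finset.sum_ite_eq' Finset.univ i₀]
    simp
  rw [energy, energy, hpot, hkin]
  ring

theorem integrable_of_integral_eq_one {k : ℕ} (ρ : (Fin k → ℝ) → ℝ)
    (hint : ∫ y, ρ y = 1) : Integrable ρ := by
  by_contra h
  rw [integral_undef h] at hint
  exact one_ne_zero hint.symm

theorem Gbound (hM : 0 < M) (hV : V.PosDef)
    (ρξ : (Fin l → ℝ) → ℝ) (hρξ0 : ∀ y, 0 ≤ ρξ y) (hρξint : ∫ y, ρξ y = 1)
    (K : Set (Fin d → ℝ)) (α : ℝ) (hα0 : 0 < α) (hα1 : α < 1)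
    (hJdrift : ∀ p ∉ K, ∫ y, (∑ j, J y p j ^ 2) * ρξ y ≤ α * ∑ j, p j ^ 2)
    (Cb : ℝ) (hCb : ∀ p ∈ K, ∫ y, (∑ j, J y p j ^ 2) * ρξ y ≤ Cb)
    (φ : Phase N d) :
    (∫ y, energy M V (JL hN J y φ) * ρξ y)
      ≤ energy M V φ - ((1 - α) / (2 * M)) * kin1 hN φ + (max Cb 0) / (2 * M) := by
  set p₁ := mom1 hN φ with hp₁
  set Cb' := max Cb 0 with hCb'
  have hCb'0 : 0 ≤ Cb' := le_max_right _ _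
  set E := energy M V φ with hE
  set k₁ := kin1 hN φ with hk₁
  have hk₁0 : 0 ≤ k₁ := kin1_nonneg hN φ
  have hc₀ : 0 ≤ E - (1 / (2 * M)) * k₁ := by
    have := kin1_le_energy M V hM hV hN φ
    have h2M : 0 < 2 * M := by linarith
    rw [sub_nonneg, div_mul_eq_mul_div, div_le_iff₀ h2M]
    linarith
  have hsum : ∑ j, p₁ j ^ 2 = k₁ := rfl
  set W := fun y => (∑ j, J y p₁ j ^ 2) * ρξ y with hW
  have hWnn : ∀ y, 0 ≤ W y := fun y =>
    mul_nonneg (Finset.sum_nonneg fun j _ => sq_nonneg _) (hρξ0 y)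
  have hWle : ∫ y, W y ≤ α * k₁ + Cb' := by
    by_cases hpK : p₁ ∈ K
    · have := hCb p₁ hpK
      have h2 : (0:ℝ) ≤ α * k₁ := mul_nonneg hα0.le hk₁0
      calc ∫ y, W y ≤ Cb := this
        _ ≤ Cb' := le_max_left _ _
        _ ≤ α * k₁ + Cb' := by linarith
    · have := hJdrift p₁ hpK
      rw [hsum] at this
      calc ∫ y, W y ≤ α * k₁ := this
        _ ≤ α * k₁ + Cb' := by linarith
  have hcongr : (fun y => energy M V (JL hN J y φ) * ρξ y)
      = fun y => (E - (1 / (2 * M)) * k₁) * ρξ y + (1 / (2 * M)) * W y := by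
    funext y
    rw [energy_JL M V hN J hM y φ, hW]
    ring
  have hgoal : E - (1 / (2 * M)) * k₁ + (1 / (2 * M)) * (α * k₁ + Cb')
      = E - ((1 - α) / (2 * M)) * k₁ + Cb' / (2 * M) := by
    field_simp
    ring
  by_cases hWint : Integrable W
  · rw [hcongr, integral_add ((integrable_of_integral_eq_one ρξ hρξint).const_mul _)
      (hWint.const_mul _), integral_const_mul, integral_const_mul, hρξint, mul_one]
    have h1 : (0:ℝ) < 1 / (2 * M) := by positivity
    calc E - 1 / (2 * M) * k₁ + 1 / (2 * M) * ∫ y, W y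
        ≤ E - 1 / (2 * M) * k₁ + 1 / (2 * M) * (α * k₁ + Cb') := by nlinarith
      _ = E - ((1 - α) / (2 * M)) * k₁ + Cb' / (2 * M) := hgoal
  · have hnint : ¬ Integrable (fun y => energy M V (JL hN J y φ) * ρξ y) := by
      intro hint
      apply hWint
      have : W = fun y => (2 * M) * ((energy M V (JL hN J y φ) * ρξ y)
          - (E - (1 / (2 * M)) * k₁) * ρξ y) := by
        funext y
        rw [energy_JL M V hN J hM y φ, hW]
        field_simp
        ring
      rw [this]
      exact ((hint.sub ((integrable_of_integral_eq_one ρξ hρξint).const_mul _)).const_mul _)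
    rw [integral_undef hnint]
    have h1 : ((1 - α) / (2 * M)) * k₁ ≤ (1 / (2 * M)) * k₁ := by
      apply mul_le_mul_of_nonneg_right _ hk₁0
      gcongr
      linarith
    have h2 : 0 ≤ Cb' / (2 * M) := by positivity
    linarith
end Coll

/-- Drift (Lyapunov) condition for the embedded chain: if the collision map decreases large
kinetic energies on average, then the mean energy after one step decreases proportionally to
the energy, outside a compact set `K'`. -/
theorem drift_condition (N d l : ℕ) (hN : 0 < N) (hd : 0 < d) (M : ℝ) (hM : 0 < M)
    (V : Matrix (PIdx N d) (PIdx N d) ℝ) (hV : V.PosDef)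
    (hcompl : Submodule.span ℝ
        (Set.range fun k : ℕ =>
          (V ^ k).mulVec (Pi.single ((⟨0, hN⟩ : Fin N), (⟨0, hd⟩ : Fin d)) 1)) = ⊤)
    (J : (Fin l → ℝ) → (Fin d → ℝ) → (Fin d → ℝ))
    (hJmeas : Measurable fun y : (Fin l → ℝ) × (Fin d → ℝ) => J y.1 y.2)
    (ρτ : ℝ → ℝ) (hρτmeas : Measurable ρτ) (hρτpos : ∀ t, 0 < t → 0 < ρτ t)
    (hρτzero : ∀ t, t ≤ 0 → ρτ t = 0) (hρτint : ∫ t, ρτ t = 1)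
    (ρξ : (Fin l → ℝ) → ℝ) (hρξmeas : Measurable ρξ) (hρξ0 : ∀ y, 0 ≤ ρξ y)
    (hρξint : ∫ y, ρξ y = 1)
    (K : Set (Fin d → ℝ)) (hK : IsCompact K) (α : ℝ) (hα0 : 0 < α) (hα1 : α < 1)
    (hJdrift : ∀ p ∉ K, ∫ y, (∑ j, J y p j ^ 2) * ρξ y ≤ α * ∑ j, p j ^ 2)
    (hJbdd : ∃ Cb : ℝ, ∀ p ∈ K, ∫ y, (∑ j, J y p j ^ 2) * ρξ y ≤ Cb) :
    ∃ K' : Set (Phase N d), IsCompact K' ∧ ∃ r : ℝ, 0 < r ∧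
      ∀ ψ : Phase N d, ψ ∉ K' →
        (∫ t in Set.Ioi (0 : ℝ),
            (∫ y, energy M V (JL hN J y (flow M V t ψ)) * ρξ y) * ρτ t)
          - energy M V ψ ≤ -(r * energy M V ψ) := by
  obtain ⟨Cb, hCb⟩ := hJbdd
  obtain ⟨c2, hc2, hc2b⟩ := Ffun_lower M V ρτ hN hd hM hV hρτmeas hρτpos hρτint hcompl
  obtain ⟨cE, hcE, hcEl⟩ := quad_lower (energy M V) (energy_continuous M V)
    (fun ψ hψ => energy_pos M V hM hV ψ hψ) (energy_smul M V)
  have h1α : (0:ℝ) < 1 - α := by linarith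
  set Cb' := max Cb 0 with hCb'def
  have hCb'0 : (0:ℝ) ≤ Cb' := le_max_right _ _
  set β := ((1 - α) / (2 * M)) * c2 with hβdef
  have hβ0 : 0 < β := by positivity
  set C₂ := Cb' / (2 * M) with hC₂def
  have hC₂0 : (0:ℝ) ≤ C₂ := by positivity
  set E₀ := 2 * C₂ / β with hE₀def
  have hE₀0 : (0:ℝ) ≤ E₀ := by positivity
  refine ⟨{ψ : Phase N d | energy M V ψ ≤ E₀}, ?_, β / 2, by positivity, ?_⟩
  · -- compactness of K'
    set r0 := max 1 (E₀ / cE) with hr0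
    have hclosed : IsClosed {ψ : Phase N d | energy M V ψ ≤ E₀} :=
      isClosed_le (energy_continuous M V) continuous_const
    refine IsCompact.of_isClosed_subset (isCompact_closedBall 0 r0) hclosed ?_
    intro ψ hψ
    rw [Metric.mem_closedBall, dist_zero_right]
    have h1 : cE * ‖ψ‖ ^ 2 ≤ E₀ := le_trans (hcEl ψ) hψ
    by_cases hn : ‖ψ‖ ≤ 1
    · exact le_trans hn (le_max_left _ _)
    · push_neg at hn
      have h2 : ‖ψ‖ ≤ ‖ψ‖ ^ 2 := by nlinarith
      have h3 : ‖ψ‖ ≤ E₀ / cE := by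
        rw [le_div_iff₀ hcE]
        nlinarith
      exact le_trans h3 (le_max_right _ _)
  · -- drift inequality
    intro ψ hψ
    simp only [Set.mem_setOf_eq, not_le] at hψ
    set E := energy M V ψ with hEdef
    have hE0 : 0 ≤ E := energy_nonneg M V hM hV ψ
    have hgint1 : Integrable (fun t => kin1 hN (flow M V t ψ) * ρτ t)
        (volume.restrict (Set.Ioi (0:ℝ))) :=
      Ffun_integrand_integrable M V ρτ hN hM hV hρτmeas hρτpos hρτint ψ
    have hρτres : Integrable ρτ (volume.restrict (Set.Ioi (0:ℝ))) :=
      (rhotau_integrable ρτ hρτint).restrict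
    set g := fun t => (E + C₂) * ρτ t
        - ((1 - α) / (2 * M)) * (kin1 hN (flow M V t ψ) * ρτ t) with hgdef
    have hgint : Integrable g (volume.restrict (Set.Ioi (0:ℝ))) :=
      (hρτres.const_mul _).sub (hgint1.const_mul _)
    have hmono : (∫ t in Set.Ioi (0:ℝ),
        (∫ y, energy M V (JL hN J y (flow M V t ψ)) * ρξ y) * ρτ t)
        ≤ ∫ t in Set.Ioi (0:ℝ), g t := by
      refine integral_mono_of_nonneg ?_ hgint ?_
      · rw [Filter.EventuallyLE, ae_restrict_iff' measurableSet_Ioi]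
        filter_upwards with t ht
        have hin : 0 ≤ ∫ y, energy M V (JL hN J y (flow M V t ψ)) * ρξ y :=
          integral_nonneg fun y =>
            mul_nonneg (energy_nonneg M V hM hV _) (hρξ0 y)
        exact mul_nonneg hin (hρτpos t ht).le
      · rw [Filter.EventuallyLE, ae_restrict_iff' measurableSet_Ioi]
        filter_upwards with t ht
        have hGb := Gbound M V hN J hM hV ρξ hρξ0 hρξint K α hα0 hα1 hJdrift Cb hCb
          (flow M V t ψ)
        rw [energy_flow M V hM hV] at hGb
        have h2 : (∫ y, energy M V (JL hN J y (flow M V t ψ)) * ρξ y) * ρτ t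
            ≤ (E + C₂ - ((1 - α) / (2 * M)) * kin1 hN (flow M V t ψ)) * ρτ t := by
          refine mul_le_mul_of_nonneg_right ?_ (hρτpos t ht).le
          calc (∫ y, energy M V (JL hN J y (flow M V t ψ)) * ρξ y)
              ≤ E - ((1 - α) / (2 * M)) * kin1 hN (flow M V t ψ) + Cb' / (2 * M) := hGb
            _ = E + C₂ - ((1 - α) / (2 * M)) * kin1 hN (flow M V t ψ) := by
                rw [hC₂def]; ring
        calc (∫ y, energy M V (JL hN J y (flow M V t ψ)) * ρξ y) * ρτ t
            ≤ (E + C₂ - ((1 - α) / (2 * M)) * kin1 hN (flow M V t ψ)) * ρτ t := h2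
          _ = g t := by rw [hgdef]; ring
    have hρτ1 : ∫ t in Set.Ioi (0:ℝ), ρτ t = 1 := by
      rw [setIntegral_eq_integral_of_forall_compl_eq_zero fun t ht => hρτzero t (by
        simpa using ht)]
      exact hρτint
    have hgval : ∫ t in Set.Ioi (0:ℝ), g t
        = (E + C₂) - ((1 - α) / (2 * M)) * Ffun M V ρτ hN ψ := by
      rw [hgdef, integral_sub (hρτres.const_mul _) (hgint1.const_mul _),
        integral_const_mul, integral_const_mul, hρτ1, mul_one]
      rfl
    have hF : c2 * E ≤ Ffun M V ρτ hN ψ := hc2b ψ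
    have hcoef : 0 < (1 - α) / (2 * M) := by positivity
    have h5 : ((1 - α) / (2 * M)) * (c2 * E) ≤ ((1 - α) / (2 * M)) * Ffun M V ρτ hN ψ :=
      mul_le_mul_of_nonneg_left hF hcoef.le
    have hβE : β * E = ((1 - α) / (2 * M)) * (c2 * E) := by rw [hβdef]; ring
    have hE₀E : 2 * C₂ < E * β := by
      rw [hE₀def] at hψ
      exact (div_lt_iff₀ hβ0).1 hψ
    calc (∫ t in Set.Ioi (0:ℝ),
          (∫ y, energy M V (JL hN J y (flow M V t ψ)) * ρξ y) * ρτ t) - E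
        ≤ (∫ t in Set.Ioi (0:ℝ), g t) - E := by linarith
      _ = (E + C₂) - ((1 - α) / (2 * M)) * Ffun M V ρτ hN ψ - E := by rw [hgval]
      _ ≤ (E + C₂) - β * E - E := by rw [hβE]; linarith
      _ ≤ -(β / 2 * E) := by linarith
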